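/- Write μ = μ_1 + μ_2 in L ⊗ ℚ, where μ_1 ∈ ℚ·κ and μ_2 ∈ Λ ⊗ ℚ (this decomposition exists and is unique since ℤκ ⊕ Λ has finite index in L). Then d·μ_1 ∈ ℤκ and d·μ_2 ∈ Λ, and the classes of μ_1 in (ℚκ)/ℤκ and of μ_2 in (Λ ⊗ ℚ)/Λ each have order exactly d. -/

import Mathlib

open scoped TensorProduct

/-- The canonical map `L → ℚ ⊗[ℤ] L`, `x ↦ 1 ⊗ x`. -/
noncomputable def toRat (L : Type*) [AddCommGroup L] [Module ℤ L] :
    L →ₗ[ℤ] ℚ ⊗[ℤ] L :=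
  TensorProduct.mk ℤ ℚ L 1

section Aux

variable {L : Type*} [AddCommGroup L] [Module ℤ L]

lemma toRat_injective (L : Type*) [AddCommGroup L] [Module ℤ L] [Module.Free ℤ L] :
    Function.Injective (toRat L) := by
  have h1 : Function.Injective (LinearMap.rTensor (R := ℤ) L (Algebra.linearMap ℤ ℚ)) :=
    Module.Flat.rTensor_preserves_injective_linearMap _ (fun a b h => by simpa using h)
  have key : ∀ x : L, toRat L x =
      LinearMap.rTensor L (Algebra.linearMap ℤ ℚ) ((TensorProduct.lid ℤ L).symm x) := by
    intro x; simp [toRat, TensorProduct.lid]; rfl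
  intro a b hab
  rw [key a, key b] at hab
  exact (TensorProduct.lid ℤ L).symm.injective (h1 hab)

lemma toRat_int_smul (n : ℤ) (x : L) : ((n : ℚ)) • toRat L x = toRat L (n • x) := by
  rw [Int.cast_smul_eq_zsmul, map_zsmul]

/-- `ℤ`-span singleton membership with the `zsmul` instance. -/
lemma mem_span_singleton_zsmul {M : Type*} [AddCommGroup M] [Module ℤ M] {x y : M} :
    x ∈ Submodule.span ℤ {y} ↔ ∃ a : ℤ, a • y = x := by
  rw [Submodule.mem_span_singleton]
  constructor
  · rintro ⟨a, ha⟩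
    exact ⟨a, by simpa only [← Int.cast_smul_eq_zsmul ℤ, Int.cast_id] using ha⟩
  · rintro ⟨a, ha⟩
    refine ⟨a, ?_⟩
    simpa only [← Int.cast_smul_eq_zsmul ℤ, Int.cast_id] using ha

lemma clear_denom {Λ : Submodule ℤ L} {v : ℚ ⊗[ℤ] L}
    (hv : v ∈ Submodule.span ℚ (toRat L '' (Λ : Set L))) :
    ∃ n : ℤ, n ≠ 0 ∧ n • v ∈ Submodule.map (toRat L) Λ := by
  induction hv using Submodule.span_induction with
  | mem x hx => exact ⟨1, one_ne_zero, by rw [one_smul]; exact Submodule.mem_map.mpr (by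
      obtain ⟨w, hw, rfl⟩ := hx; exact ⟨w, hw, rfl⟩)⟩
  | zero => exact ⟨1, one_ne_zero, by simp⟩
  | add x y _ _ hx hy =>
      obtain ⟨m, hm, hxm⟩ := hx; obtain ⟨n, hn, hyn⟩ := hy
      refine ⟨m * n, mul_ne_zero hm hn, ?_⟩
      have h : (m * n) • (x + y) = n • (m • x) + m • (n • y) := by
        rw [smul_add, smul_smul, smul_smul, mul_comm n m]
      rw [h]
      exact add_mem (Submodule.smul_mem _ n hxm) (Submodule.smul_mem _ m hyn)
  | smul q x _ hx =>
      obtain ⟨m, hm, hxm⟩ := hx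
      refine ⟨q.den * m, mul_ne_zero (by exact_mod_cast q.den_nz) hm, ?_⟩
      have h : ((q.den : ℤ) * m) • (q • x) = q.num • (m • x) := by
        rw [smul_smul, ← Int.cast_smul_eq_zsmul ℚ, ← Int.cast_smul_eq_zsmul ℚ (q.num * m),
          smul_smul]
        congr 1
        push_cast
        rw [mul_comm (q.den : ℚ) (m : ℚ), mul_assoc, Rat.den_mul_eq_num]; ring
      rw [h]
      exact Submodule.smul_mem _ q.num hxm

variable [Module.Free ℤ L]

lemma kappa_sat (κ : L) (hκprim : ∀ (m : ℤ) (x : L), κ = m • x → m = 1 ∨ m = -1)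
    {c b : ℤ} {x : L} (hc : c ≠ 0) (h : c • x = b • κ) :
    x ∈ Submodule.span ℤ {κ} := by
  haveI : @NoZeroSMulDivisors ℤ L _ _ (‹Module ℤ L›).toDistribMulAction.toDistribSMul.toSMul :=
    @NoZeroSMulDivisors.mk ℤ L _ _ (‹Module ℤ L›).toDistribMulAction.toDistribSMul.toSMul
      (fun h => smul_eq_zero.mp h)
  have hpos : 0 < Int.gcd c b := Nat.pos_of_ne_zero (fun h0 => hc (Int.gcd_eq_zero_iff.mp h0).1)
  have hgne : (Int.gcd c b : ℤ) ≠ 0 := by exact_mod_cast hpos.ne'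
  set g : ℤ := (Int.gcd c b : ℤ) with hg
  obtain ⟨c', hc'⟩ : g ∣ c := Int.gcd_dvd_left c b
  obtain ⟨b', hb'⟩ : g ∣ b := Int.gcd_dvd_right c b
  have hcop : IsCoprime c' b' := by
    rw [Int.isCoprime_iff_gcd_eq_one]
    have h2 := Int.gcd_div_gcd_div_gcd hpos
    rw [← hg, hc', hb', Int.mul_ediv_cancel_left _ hgne, Int.mul_ediv_cancel_left _ hgne] at h2
    exact h2
  have hkey : c' • x = b' • κ := by
    have h9 : g • (c' • x) = g • (b' • κ) := by
      rw [← mul_zsmul, ← mul_zsmul, ← hc', ← hb']; exact h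
    set y : L := c' • x - b' • κ with hy
    have h10 : g • y = (0 : L) := by
      rw [hy, zsmul_sub, h9, sub_self]
    simp only [← Int.cast_smul_eq_zsmul ℤ, Int.cast_id] at h10
    rcases this.eq_zero_or_eq_zero_of_smul_eq_zero h10 with h11 | h11
    · exact absurd h11 hgne
    · rw [hy] at h11; exact sub_eq_zero.mp h11
  obtain ⟨s, t, hst⟩ := hcop
  have hκ : κ = c' • (s • κ + t • x) :=
    calc κ = (s * c' + t * b') • κ := by rw [show s * c' + t * b' = 1 by linarith, one_zsmul]
    _ = (s * c') • κ + (t * b') • κ := add_zsmul κ _ _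
    _ = (c' * s) • κ + (t * b') • κ := by rw [mul_comm s c']
    _ = c' • s • κ + t • (b' • κ) := by rw [mul_zsmul, mul_zsmul]
    _ = c' • s • κ + t • (c' • x) := by rw [hkey]
    _ = c' • s • κ + (t * c') • x := by rw [mul_zsmul]
    _ = c' • s • κ + c' • t • x := by rw [mul_comm t c', mul_zsmul]
    _ = c' • (s • κ + t • x) := (zsmul_add _ _ _).symm
  rcases hκprim c' _ hκ with h1 | h1
  · exact mem_span_singleton_zsmul.mpr ⟨b', by rw [← hkey, h1, one_zsmul]⟩
  · refine mem_span_singleton_zsmul.mpr ⟨-b', ?_⟩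
    rw [h1] at hkey
    rw [neg_zsmul]
    rw [show (-1 : ℤ) • x = -x by rw [neg_zsmul, one_zsmul]] at hkey
    rw [← hkey, neg_neg]

lemma rat_smul_toRat {q : ℚ} {x u : L}
    (h : q • toRat L x = toRat L u) : q.num • x = (q.den : ℤ) • u := by
  apply toRat_injective L
  calc toRat L (q.num • x) = (q.num : ℚ) • toRat L x := (toRat_int_smul _ _).symm
  _ = ((q.den : ℚ) * q) • toRat L x := by rw [Rat.den_mul_eq_num]
  _ = (q.den : ℚ) • (q • toRat L x) := mul_smul _ _ _
  _ = (q.den : ℚ) • toRat L u := congrArg (fun z => (q.den : ℚ) • z) h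
  _ = (((q.den : ℤ)) : ℚ) • toRat L u := by norm_num
  _ = toRat L ((q.den : ℤ) • u) := toRat_int_smul _ _

end Aux

lemma mu_order {L : Type*} [AddCommGroup L] [Module ℤ L] (S : Submodule ℤ L) (d : ℕ)
    (μ : L) (hgen : ∀ x : L, ∃ n : ℤ, x - n • μ ∈ S)
    (hcard : Nat.card (L ⧸ S) = d) :
    ∀ n : ℤ, n • μ ∈ S ↔ (d : ℤ) ∣ n := by
  set m : L ⧸ S := Submodule.Quotient.mk μ with hm
  have hmk : ∀ n : ℤ, (Submodule.Quotient.mk (n • μ) : L ⧸ S) = n • m := by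
    intro n
    rw [hm]
    exact (map_zsmul (S.mkQ) n μ).symm
  have htop : AddSubgroup.zmultiples m = ⊤ := by
    rw [AddSubgroup.eq_top_iff']
    intro q
    obtain ⟨x, rfl⟩ := Submodule.Quotient.mk_surjective S q
    obtain ⟨n, hn⟩ := hgen x
    rw [AddSubgroup.mem_zmultiples_iff]
    refine ⟨n, ?_⟩
    rw [← hmk]
    exact ((Submodule.Quotient.eq S).mpr hn).symm
  have hord : addOrderOf m = d := by
    rw [← Nat.card_zmultiples m, htop, ← hcard]
    exact Nat.card_congr (Equiv.subtypeUnivEquiv fun x => AddSubgroup.mem_top x)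
  intro n
  rw [← Submodule.Quotient.mk_eq_zero, hmk, ← hord]
  exact (addOrderOf_dvd_iff_zsmul_eq_zero).symm

/-- with `μ = μ₁ + μ₂` in `L ⊗ ℚ`, `μ₁ ∈ ℚκ`, `μ₂ ∈ Λ ⊗ ℚ`
(this decomposition exists and is unique), one has `d·μ₁ ∈ ℤκ`, `d·μ₂ ∈ Λ`,
and the classes of `μ₁` in `ℚκ/ℤκ` and of `μ₂` in `(Λ ⊗ ℚ)/Λ` have order
exactly `d`. -/
theorem statement18 {L : Type*} [AddCommGroup L] [Module ℤ L]
    [Module.Free ℤ L] [Module.Finite ℤ L]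
    (κ : L) (hκprim : ∀ (m : ℤ) (x : L), κ = m • x → m = 1 ∨ m = -1)
    (Λ : Submodule ℤ L)
    (hΛprim : ∀ (m : ℤ) (x : L), m ≠ 0 → m • x ∈ Λ → x ∈ Λ)
    (hdisj : Submodule.span ℤ {κ} ⊓ Λ = ⊥)
    (d : ℕ) (hd : 1 < d) (μ : L)
    (hgen : ∀ x : L, ∃ n : ℤ, x - n • μ ∈ Submodule.span ℤ {κ} ⊔ Λ)
    (hcard : Nat.card (L ⧸ (Submodule.span ℤ {κ} ⊔ Λ)) = d) :
    (∃! p : (ℚ ⊗[ℤ] L) × (ℚ ⊗[ℤ] L),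
        p.1 ∈ Submodule.span ℚ {toRat L κ} ∧
        p.2 ∈ Submodule.span ℚ (toRat L '' (Λ : Set L)) ∧
        toRat L μ = p.1 + p.2) ∧
      ∀ μ₁ μ₂ : ℚ ⊗[ℤ] L,
        μ₁ ∈ Submodule.span ℚ {toRat L κ} →
        μ₂ ∈ Submodule.span ℚ (toRat L '' (Λ : Set L)) →
        toRat L μ = μ₁ + μ₂ →
          ((d : ℤ) • μ₁ ∈ Submodule.span ℤ {toRat L κ} ∧
            (d : ℤ) • μ₂ ∈ Submodule.map (toRat L) Λ ∧
            (∀ n : ℕ, (n : ℤ) • μ₁ ∈ Submodule.span ℤ {toRat L κ} ↔ d ∣ n) ∧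
            (∀ n : ℕ, (n : ℤ) • μ₂ ∈ Submodule.map (toRat L) Λ ↔ d ∣ n)) := by
  haveI : @NoZeroSMulDivisors ℤ L _ _ (‹Module ℤ L›).toDistribMulAction.toDistribSMul.toSMul :=
    @NoZeroSMulDivisors.mk ℤ L _ _ (‹Module ℤ L›).toDistribMulAction.toDistribSMul.toSMul
      (fun h => smul_eq_zero.mp h)
  have hinj := toRat_injective L
  have hκ0 : κ ≠ 0 := by
    intro h0
    rcases hκprim 2 0 (by rw [h0, zsmul_zero]) with h | h <;> omega
  have hd0 : (d : ℚ) ≠ 0 := by positivity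
  set S : Submodule ℤ L := Submodule.span ℤ {κ} ⊔ Λ with hS
  have horder := mu_order S d μ hgen hcard
  -- decomposition of d • μ
  have hdμ : (d : ℤ) • μ ∈ S := (horder d).mpr dvd_rfl
  obtain ⟨y, hy, w, hw, hyw⟩ := Submodule.mem_sup.mp hdμ
  obtain ⟨a, ha⟩ := mem_span_singleton_zsmul.mp hy
  -- the canonical decomposition
  set ν₁ : ℚ ⊗[ℤ] L := ((a : ℚ) / d) • toRat L κ with hν₁
  set ν₂ : ℚ ⊗[ℤ] L := ((d : ℚ))⁻¹ • toRat L w with hν₂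
  have hmem1 : ν₁ ∈ Submodule.span ℚ {toRat L κ} :=
    Submodule.mem_span_singleton.mpr ⟨_, rfl⟩
  have hmem2 : ν₂ ∈ Submodule.span ℚ (toRat L '' (Λ : Set L)) :=
    Submodule.smul_mem _ _ (Submodule.subset_span ⟨w, hw, rfl⟩)
  have e1 : (d : ℚ) • ν₁ = toRat L y := by
    rw [hν₁, smul_smul, mul_div_cancel₀ _ hd0, toRat_int_smul, ha]
  have e2 : (d : ℚ) • ν₂ = toRat L w := by
    rw [hν₂, smul_smul, mul_inv_cancel₀ hd0, one_smul]
  have hsum : toRat L μ = ν₁ + ν₂ := by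
    have h1 : (d : ℚ) • toRat L μ = (d : ℚ) • (ν₁ + ν₂) := by
      rw [smul_add, e1, e2, ← map_add, hyw,
        show (d : ℚ) = ((d : ℤ) : ℚ) from by push_cast; rfl, toRat_int_smul]
    exact smul_right_injective _ hd0 h1
  -- disjointness
  have disj : ∀ v : ℚ ⊗[ℤ] L, v ∈ Submodule.span ℚ {toRat L κ} →
      v ∈ Submodule.span ℚ (toRat L '' (Λ : Set L)) → v = 0 := by
    intro v hv1 hv2
    obtain ⟨q, hq0⟩ := Submodule.mem_span_singleton.mp hv1
    have hq : q • toRat L κ = v := hq0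
    obtain ⟨m, hm, hmv⟩ := clear_denom hv2
    obtain ⟨u, hu, huv⟩ := Submodule.mem_map.mp hmv
    set r : ℚ := (m : ℚ) * q with hr
    have hrv : r • toRat L κ = toRat L u := by
      rw [hr, mul_smul, hq, huv]
      exact Int.cast_smul_eq_zsmul ℚ m v
    have hLnum : r.num • κ = (r.den : ℤ) • u := rat_smul_toRat hrv
    have hmem : r.num • κ ∈ Submodule.span ℤ {κ} ⊓ Λ := by
      constructor
      · exact mem_span_singleton_zsmul.mpr ⟨r.num, rfl⟩
      · rw [hLnum]; exact zsmul_mem hu _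
    rw [hdisj] at hmem
    have hnum0 : r.num = 0 := by
      have h0 : r.num • κ = 0 := hmem
      simp only [← Int.cast_smul_eq_zsmul ℤ, Int.cast_id] at h0
      rcases this.eq_zero_or_eq_zero_of_smul_eq_zero h0 with
        h | h
      · exact h
      · exact absurd h hκ0
    have hr0 : r = 0 := Rat.num_eq_zero.mp hnum0
    have hq0 : q = 0 := by
      rcases mul_eq_zero.mp (hr ▸ hr0) with h | h
      · exact absurd (by exact_mod_cast h) hm
      · exact h
    rw [← hq, hq0, zero_smul]
  -- uniqueness of the decomposition
  have huniq : ∀ μ₁ μ₂ : ℚ ⊗[ℤ] L,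
      μ₁ ∈ Submodule.span ℚ {toRat L κ} →
      μ₂ ∈ Submodule.span ℚ (toRat L '' (Λ : Set L)) →
      toRat L μ = μ₁ + μ₂ → μ₁ = ν₁ ∧ μ₂ = ν₂ := by
    intro μ₁ μ₂ h1 h2 h3
    have heq : μ₁ + μ₂ = ν₁ + ν₂ := h3.symm.trans hsum
    have hdiff : μ₁ - ν₁ = ν₂ - μ₂ := by
      rw [sub_eq_sub_iff_add_eq_add, heq, add_comm]
    have hz : μ₁ - ν₁ = 0 := by
      apply disj
      · exact sub_mem h1 hmem1
      · rw [hdiff]; exact sub_mem hmem2 h2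
    have hμ1 : μ₁ = ν₁ := sub_eq_zero.mp hz
    refine ⟨hμ1, ?_⟩
    have h4 : ν₁ + ν₂ = ν₁ + μ₂ := by rw [← hsum, h3, hμ1]
    exact (add_left_cancel h4).symm
  -- facts about the canonical decomposition
  have A : (d : ℤ) • ν₁ = toRat L y := by
    rw [← Int.cast_smul_eq_zsmul ℚ]
    push_cast
    exact e1
  have B : (d : ℤ) • ν₂ = toRat L w := by
    rw [← Int.cast_smul_eq_zsmul ℚ]
    push_cast
    exact e2
  have part1 : (d : ℤ) • ν₁ ∈ Submodule.span ℤ {toRat L κ} := by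
    rw [A]
    exact mem_span_singleton_zsmul.mpr ⟨a, by rw [← map_zsmul (toRat L) a κ, ha]⟩
  have part2 : (d : ℤ) • ν₂ ∈ Submodule.map (toRat L) Λ := by
    rw [B]
    exact Submodule.mem_map_of_mem hw
  have part3 : ∀ n : ℕ, (n : ℤ) • ν₁ ∈ Submodule.span ℤ {toRat L κ} ↔ d ∣ n := by
    intro n
    constructor
    · intro hmem'
      obtain ⟨b, hb⟩ := mem_span_singleton_zsmul.mp hmem'
      have hν₂eq : ν₂ = toRat L μ - ν₁ := eq_sub_of_add_eq' hsum.symm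
      have h7 : (n : ℤ) • ν₂ = toRat L ((n : ℤ) • μ - b • κ) := by
        rw [hν₂eq, zsmul_sub, ← hb, map_sub, map_zsmul, map_zsmul]
      have h8 : (n : ℤ) • ν₂ ∈ Submodule.span ℚ (toRat L '' (Λ : Set L)) :=
        zsmul_mem hmem2 n
      obtain ⟨m, hm, hmv⟩ := clear_denom h8
      rw [h7, ← map_zsmul (toRat L)] at hmv
      obtain ⟨u, hu, huv⟩ := Submodule.mem_map.mp hmv
      have h9 : m • ((n : ℤ) • μ - b • κ) ∈ Λ := by
        rw [← hinj huv]; exact hu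
      have h10 : (n : ℤ) • μ - b • κ ∈ Λ := hΛprim m _ hm h9
      have h11 : (n : ℤ) • μ ∈ S := by
        rw [hS]
        refine Submodule.mem_sup.mpr ⟨b • κ, ?_, (n : ℤ) • μ - b • κ, h10, ?_⟩
        · exact mem_span_singleton_zsmul.mpr ⟨b, rfl⟩
        · exact add_sub_cancel _ _
      exact_mod_cast (horder n).mp h11
    · rintro ⟨k, rfl⟩
      have h12 : ((d * k : ℕ) : ℤ) • ν₁ = (k : ℤ) • ((d : ℤ) • ν₁) := by
        rw [← mul_zsmul]
        congr 1
        push_cast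
        ring
      rw [h12, A]
      refine mem_span_singleton_zsmul.mpr ⟨(k : ℤ) * a, ?_⟩
      rw [mul_zsmul, ← map_zsmul (toRat L) a κ, ha]
  have part4 : ∀ n : ℕ, (n : ℤ) • ν₂ ∈ Submodule.map (toRat L) Λ ↔ d ∣ n := by
    intro n
    constructor
    · intro hmem'
      obtain ⟨u, hu, huv⟩ := Submodule.mem_map.mp hmem'
      have hν₁eq : ν₁ = toRat L μ - ν₂ := eq_sub_of_add_eq hsum.symm
      have h7 : (n : ℤ) • ν₁ = toRat L ((n : ℤ) • μ - u) := by
        rw [hν₁eq, zsmul_sub, ← huv, map_sub, map_zsmul]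
      have h8 : (n : ℤ) • ν₁ ∈ Submodule.span ℚ {toRat L κ} := zsmul_mem hmem1 n
      obtain ⟨q, hq0⟩ := Submodule.mem_span_singleton.mp h8
      have hq : q • toRat L κ = toRat L ((n : ℤ) • μ - u) := by rw [hq0, h7]
      have h9 : q.num • κ = (q.den : ℤ) • ((n : ℤ) • μ - u) := rat_smul_toRat hq
      have h10 : (n : ℤ) • μ - u ∈ Submodule.span ℤ {κ} := by
        refine kappa_sat κ hκprim (c := (q.den : ℤ)) (b := q.num) ?_ h9.symm
        exact_mod_cast q.den_nz
      have h11 : (n : ℤ) • μ ∈ S := by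
        rw [hS]
        refine Submodule.mem_sup.mpr ⟨(n : ℤ) • μ - u, h10, u, hu, ?_⟩
        exact sub_add_cancel _ _
      exact_mod_cast (horder n).mp h11
    · rintro ⟨k, rfl⟩
      have h12 : ((d * k : ℕ) : ℤ) • ν₂ = (k : ℤ) • ((d : ℤ) • ν₂) := by
        rw [← mul_zsmul]
        congr 1
        push_cast
        ring
      rw [h12, B, ← map_zsmul (toRat L)]
      exact Submodule.mem_map_of_mem (zsmul_mem hw _)
  refine ⟨⟨(ν₁, ν₂), ⟨hmem1, hmem2, hsum⟩, ?_⟩, ?_⟩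
  · rintro ⟨p1, p2⟩ ⟨hp1, hp2, hp3⟩
    obtain ⟨hA, hB⟩ := huniq p1 p2 hp1 hp2 hp3
    exact Prod.ext hA hB
  · intro μ₁ μ₂ h1 h2 h3
    obtain ⟨hA, hB⟩ := huniq μ₁ μ₂ h1 h2 h3
    subst hA; subst hB
    exact ⟨part1, part2, part3, part4⟩
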